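/- arXiv:1503.02736 — 10 statements merged into one kernel-verified Lean document; each statement's English description precedes it below -/
import Mathlib

section
/- Let α, k, h₀, γ, ε, D∞ be real parameters with α > 0, k > 0, h₀ > 0, γ > 0, 0 < ε < 1, D∞ > 0. Define F(x) = exp(-x²) / (k/(h₀√(πα)) + erf(x)) and G(x) = x + (γ(1-ε)√π/(2D∞)) · (1/F(x)) for x > 0. Then G(x) → (1-ε)γk/(2D∞h₀√α) as x → 0⁺, G(x) → +∞ as x → +∞, and G is strictly increasing on (0, ∞) (G'(x) > 0 for all x > 0). -/
open Real Filter Set Topology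

/-- The error function `erf x = (2/√π) ∫₀ˣ exp(-t²) dt`. -/
noncomputable def erf (x : ℝ) : ℝ := (2 / Real.sqrt π) * ∫ t in (0:ℝ)..x, Real.exp (-t ^ 2)

lemma erf_hasDerivAt (x : ℝ) :
    HasDerivAt erf (2 / Real.sqrt π * Real.exp (-x ^ 2)) x := by
  have hcont : Continuous fun t : ℝ => Real.exp (-t ^ 2) := by continuity
  have h := intervalIntegral.integral_hasDerivAt_right
    (hcont.intervalIntegrable 0 x)
    (hcont.stronglyMeasurableAtFilter _ _) hcont.continuousAt
  exact h.const_mul (2 / Real.sqrt π)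

lemma erf_nonneg {x : ℝ} (hx : 0 ≤ x) : 0 ≤ erf x := by
  unfold erf
  apply mul_nonneg (by positivity)
  exact intervalIntegral.integral_nonneg hx fun t _ => (Real.exp_pos _).le

lemma erf_zero : erf 0 = 0 := by
  simp [erf]

/-- Properties of the function `G` from the convective mushy-zone Stefan problem:
`G(x) → (1-ε)γk/(2 D∞ h₀ √α)` as `x → 0⁻`, `G(x) → +∞` as `x → +∞`, and `G` is strictly
increasing on `(0,∞)` with `G'(x) > 0` for all `x > 0`. -/
theorem stmt_1 (α k h₀ γ ε Dinf : ℝ) (hα : 0 < α) (hk : 0 < k) (hh : 0 < h₀)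
    (hγ : 0 < γ) (hε0 : 0 < ε) (hε1 : ε < 1) (hD : 0 < Dinf)
    (F G : ℝ → ℝ)
    (hF : ∀ x, F x = Real.exp (-x ^ 2) / (k / (h₀ * Real.sqrt (π * α)) + erf x))
    (hG : ∀ x, G x = x + (γ * (1 - ε) * Real.sqrt π / (2 * Dinf)) * (1 / F x)) :
    Tendsto G (nhdsWithin 0 (Ioi 0)) (nhds ((1 - ε) * γ * k / (2 * Dinf * h₀ * Real.sqrt α))) ∧
    Tendsto G atTop atTop ∧
    StrictMonoOn G (Ioi 0) ∧
    ∀ x > (0:ℝ), deriv G x > 0 := by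
  set A : ℝ := k / (h₀ * Real.sqrt (π * α)) with hAdef
  set C : ℝ := γ * (1 - ε) * Real.sqrt π / (2 * Dinf) with hCdef
  have hπ : (0:ℝ) < π := Real.pi_pos
  have hA : 0 < A := by
    apply div_pos hk
    positivity
  have hε : 0 < 1 - ε := by linarith
  have hC : 0 < C := by
    apply div_pos _ (by positivity)
    positivity
  have hGeq : G = fun x => x + C * ((A + erf x) * Real.exp (x ^ 2)) := by
    funext x
    rw [hG x, hF x, one_div_div]
    rw [Real.exp_neg, div_eq_mul_inv, inv_inv]
  have hd : ∀ x : ℝ, HasDerivAt G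
      (1 + C * (2 / Real.sqrt π * Real.exp (-x ^ 2) * Real.exp (x ^ 2)
        + (A + erf x) * (Real.exp (x ^ 2) * (2 * x ^ 1)))) x := by
    intro x
    rw [hGeq]
    have hexp : HasDerivAt (fun y : ℝ => Real.exp (y ^ 2))
        (Real.exp (x ^ 2) * ((2:ℕ) * x ^ 1)) x := (hasDerivAt_pow 2 x).exp
    have h1 : HasDerivAt (fun y : ℝ => A + erf y)
        (2 / Real.sqrt π * Real.exp (-x ^ 2)) x := (erf_hasDerivAt x).const_add A
    have h3 := (hasDerivAt_id x).add ((h1.mul hexp).const_mul C)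
    refine HasDerivAt.congr_deriv (f := fun y => y + C * ((A + erf y) * Real.exp (y ^ 2))) h3 ?_
    norm_num
  have hderiv : ∀ x : ℝ, deriv G x = 1 + C * (2 / Real.sqrt π * Real.exp (-x ^ 2) * Real.exp (x ^ 2)
        + (A + erf x) * (Real.exp (x ^ 2) * (2 * x ^ 1))) := fun x => (hd x).deriv
  have hdpos : ∀ x : ℝ, 0 < x → 0 < deriv G x := by
    intro x hx
    rw [hderiv x]
    have herf := erf_nonneg hx.le
    have e1 : (0:ℝ) < 2 / Real.sqrt π * Real.exp (-x ^ 2) * Real.exp (x ^ 2) := by positivity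
    have e2 : (0:ℝ) ≤ (A + erf x) * (Real.exp (x ^ 2) * (2 * x ^ 1)) := by positivity
    nlinarith
  refine ⟨?_, ?_, ?_, fun x hx => hdpos x hx⟩
  · have hcont : Tendsto G (nhdsWithin 0 (Ioi 0)) (nhds (G 0)) :=
      ((hd 0).continuousAt.continuousWithinAt)
    have hG0 : G 0 = (1 - ε) * γ * k / (2 * Dinf * h₀ * Real.sqrt α) := by
      rw [hGeq]
      simp only [erf_zero]
      rw [hAdef, hCdef]
      have hsπ : Real.sqrt π ≠ 0 := by positivity
      have hsα : Real.sqrt α ≠ 0 := by positivity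
      rw [Real.sqrt_mul hπ.le]
      field_simp
      ring
      simp
    rw [← hG0]; exact hcont
  · apply tendsto_atTop_mono' atTop _ tendsto_id
    filter_upwards [eventually_ge_atTop (0:ℝ)] with x hx
    rw [hGeq]
    have herf := erf_nonneg hx
    have : (0:ℝ) ≤ C * ((A + erf x) * Real.exp (x ^ 2)) := by positivity
    simpa using le_add_of_nonneg_right (a := x) this
  · apply strictMonoOn_of_deriv_pos (convex_Ioi 0)
    · exact fun x _ => ((hd x).continuousAt).continuousWithinAt
    · intro x hx
      rw [interior_Ioi] at hx
      exact hdpos x hx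
end

section
/- Let α, k, h₀, D∞ be positive reals and ξ > 0. Define T(x,t) = -(h₀D∞√(πα)/k) · erf(ξ)/(1 + (h₀√(πα)/k)·erf(ξ)) · [1 - erf(x/(2√(αt)))/erf(ξ)] and s(t) = 2ξ√(αt). Then for all t > 0 and all x with 0 < x < s(t): -D∞ < T(0,t) ≤ T(x,t) < 0. -/
open Real Filter Set Topology

lemma erf_strictMono : StrictMono erf := by
  intro a b hab
  have hint : ∀ u v : ℝ, IntervalIntegrable (fun t : ℝ => Real.exp (-t ^ 2)) MeasureTheory.volume u v :=
    fun u v => (Continuous.intervalIntegrable (by continuity) u v)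
  have hpos : 0 < ∫ t in a..b, Real.exp (-t ^ 2) :=
    intervalIntegral.intervalIntegral_pos_of_pos (hint a b) (fun x => Real.exp_pos _) hab
  have hadd : (∫ t in (0:ℝ)..a, Real.exp (-t ^ 2)) + ∫ t in a..b, Real.exp (-t ^ 2)
      = ∫ t in (0:ℝ)..b, Real.exp (-t ^ 2) :=
    intervalIntegral.integral_add_adjacent_intervals (hint 0 a) (hint a b)
  have hc : 0 < 2 / Real.sqrt π := by positivity
  unfold erf
  nlinarith [mul_pos hc hpos]

/-- The explicit temperature of the convective mushy-zone problem satisfies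
`-D∞ < T(0,t) ≤ T(x,t) < 0` for all `t > 0` and `0 < x < s(t)`. -/
theorem stmt_6 (α k h₀ Dinf ξ : ℝ) (hα : 0 < α) (hk : 0 < k) (hh : 0 < h₀)
    (hD : 0 < Dinf) (hξ : 0 < ξ)
    (T : ℝ → ℝ → ℝ) (s : ℝ → ℝ)
    (hT : ∀ x t, T x t =
      -(h₀ * Dinf * Real.sqrt (π * α) / k) *
        (erf ξ / (1 + (h₀ * Real.sqrt (π * α) / k) * erf ξ)) *
        (1 - erf (x / (2 * Real.sqrt (α * t))) / erf ξ))
    (hs : ∀ t, s t = 2 * ξ * Real.sqrt (α * t)) :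
    ∀ t > (0:ℝ), ∀ x, 0 < x → x < s t →
      -Dinf < T 0 t ∧ T 0 t ≤ T x t ∧ T x t < 0 := by
  intro t ht x hx hxs
  have hst : 0 < Real.sqrt (α * t) := Real.sqrt_pos.mpr (by positivity)
  set u := x / (2 * Real.sqrt (α * t)) with hu
  have hu0 : 0 < u := by positivity
  have huξ : u < ξ := by
    rw [hs] at hxs
    rw [hu, div_lt_iff₀ (by positivity)]
    linarith
  set E := erf ξ with hE
  have hE0 : 0 < E := by
    have := erf_strictMono hξ
    rwa [erf_zero] at this
  have heu0 : 0 < erf u := by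
    have := erf_strictMono hu0
    rwa [erf_zero] at this
  have heuE : erf u < E := erf_strictMono huξ
  set B := h₀ * Real.sqrt (π * α) / k with hB
  have hB0 : 0 < B := by
    have : 0 < Real.sqrt (π * α) := Real.sqrt_pos.mpr (by positivity)
    rw [hB]; positivity
  have hden : (0:ℝ) < 1 + B * E := by positivity
  set q := E / (1 + B * E) with hq
  have hq0 : 0 < q := by positivity
  set r := erf u / E with hr
  have hr0 : 0 < r := by positivity
  have hr1 : r < 1 := by rw [hr, div_lt_one hE0]; exact heuE
  have hT0 : T 0 t = -(Dinf * B) * q := by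
    rw [hT]
    have h0 : (0:ℝ) / (2 * Real.sqrt (α * t)) = 0 := by ring
    rw [h0, erf_zero, hq, hB]
    ring
  have hTx : T x t = -(Dinf * B) * q * (1 - r) := by
    rw [hT, ← hu, ← hr, hq, hB]
    ring
  have hBq : B * q < 1 := by
    rw [hq, mul_div_assoc']
    rw [div_lt_one hden]
    nlinarith
  refine ⟨?_, ?_, ?_⟩
  · rw [hT0]
    nlinarith [mul_lt_mul_of_pos_left hBq hD]
  · rw [hT0, hTx]
    nlinarith [mul_pos (mul_pos hD hB0) (mul_pos hq0 hr0)]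
  · rw [hTx]
    nlinarith [mul_pos (mul_pos hD hB0) (mul_pos hq0 (by linarith : (0:ℝ) < 1 - r))]
end

section
/- Let c, ℓ, γ, D∞ be positive reals and 0 < ε < 1. Define F∞(x) = exp(-x²)/erf(x), G∞(x) = x + (γ(1-ε)√π/(2D∞)) · (1/F∞(x)), and G₁(x) = G∞(x)/F∞(x) for x > 0. Then the equation G₁(x) = D∞c/(ℓ√π) has a unique solution x = ξ∞ > 0. -/
open Real Filter Set Topology

lemma erf_intble (a b : ℝ) : IntervalIntegrable (fun t => Real.exp (-t ^ 2)) MeasureTheory.volume a b :=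
  (Real.continuous_exp.comp (by continuity)).intervalIntegrable a b

lemma erf_continuous : Continuous erf :=
  continuous_const.mul (intervalIntegral.continuous_primitive erf_intble 0)

lemma erf_pos {x : ℝ} (hx : 0 < x) : 0 < erf x := by
  have := erf_strictMono hx
  rwa [erf_zero] at this

/-- The equation `G₁(x) = D∞ c/(ℓ√π)` determining the interface coefficient `ξ∞` for the
mushy-zone model with prescribed temperature `-D∞` at the fixed face has a unique
positive solution. -/
theorem stmt_8 (c ℓ γ Dinf ε : ℝ) (hc : 0 < c) (hℓ : 0 < ℓ) (hγ : 0 < γ)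
    (hD : 0 < Dinf) (hε0 : 0 < ε) (hε1 : ε < 1)
    (Finf Ginf G₁ : ℝ → ℝ)
    (hFinf : ∀ x, Finf x = Real.exp (-x ^ 2) / erf x)
    (hGinf : ∀ x, Ginf x = x + (γ * (1 - ε) * Real.sqrt π / (2 * Dinf)) * (1 / Finf x))
    (hG₁ : ∀ x, G₁ x = Ginf x / Finf x) :
    ∃! ξinf : ℝ, ξinf > 0 ∧ G₁ ξinf = Dinf * c / (ℓ * Real.sqrt π) := by
  set k : ℝ := γ * (1 - ε) * Real.sqrt π / (2 * Dinf) with hk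
  have hπ : 0 < Real.sqrt π := Real.sqrt_pos.mpr Real.pi_pos
  have hkpos : 0 < k := by
    apply div_pos (mul_pos (mul_pos hγ (by linarith)) hπ) (by linarith)
  set T : ℝ := Dinf * c / (ℓ * Real.sqrt π) with hT
  have hTpos : 0 < T := by positivity
  set E : ℝ → ℝ := fun x => erf x * Real.exp (x ^ 2) with hE
  set H : ℝ → ℝ := fun x => (x + k * E x) * E x with hH
  -- G₁ = H on positives
  have hG₁H : ∀ x : ℝ, 0 < x → G₁ x = H x := by
    intro x hx
    have he : erf x ≠ 0 := (erf_pos hx).ne'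
    have hexp : Real.exp (-x ^ 2) ≠ 0 := (Real.exp_pos _).ne'
    have hinv : (Finf x)⁻¹ = erf x * Real.exp (x ^ 2) := by
      rw [hFinf, inv_div, div_eq_mul_inv, ← Real.exp_neg, neg_neg]
    rw [hG₁, hGinf, div_eq_mul_inv, hinv, one_div, hinv, hH, hE]
  have hEnonneg : ∀ x : ℝ, 0 ≤ x → 0 ≤ E x := by
    intro x hx
    have : 0 ≤ erf x := by
      rcases eq_or_lt_of_le hx with h | h
      · simp [← h, erf_zero]
      · exact (erf_pos h).le
    exact mul_nonneg this (Real.exp_pos _).le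
  have hEmono : StrictMonoOn E (Ici 0) := by
    intro a ha b hb hab
    have h1 : erf a * Real.exp (a ^ 2) ≤ erf a * Real.exp (b ^ 2) := by
      apply mul_le_mul_of_nonneg_left (Real.exp_le_exp.mpr (by nlinarith [mem_Ici.mp ha]))
      rcases eq_or_lt_of_le (mem_Ici.mp ha) with h | h
      · simp [← h, erf_zero]
      · exact (erf_pos h).le
    have h2 : erf a * Real.exp (b ^ 2) < erf b * Real.exp (b ^ 2) :=
      mul_lt_mul_of_pos_right (erf_strictMono hab) (Real.exp_pos _)
    exact lt_of_le_of_lt h1 h2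
  have hHmono : StrictMonoOn H (Ici 0) := by
    intro a ha b hb hab
    have hEab := hEmono ha hb hab
    have h1 : a + k * E a < b + k * E b :=
      add_lt_add hab (mul_lt_mul_of_pos_left hEab hkpos)
    exact mul_lt_mul'' h1 hEab
      (add_nonneg (mem_Ici.mp ha) (mul_nonneg hkpos.le (hEnonneg a (mem_Ici.mp ha))))
      (hEnonneg a (mem_Ici.mp ha))
  have hHcont : Continuous H := by
    have hEc : Continuous E := erf_continuous.mul (Real.continuous_exp.comp (by continuity))
    exact (continuous_id.add (continuous_const.mul hEc)).mul hEc
  have hH0 : H 0 = 0 := by simp [hH, hE, erf_zero]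
  -- find b with T ≤ H b
  have hE1 : 0 < E 1 := mul_pos (erf_pos one_pos) (Real.exp_pos _)
  obtain ⟨b, hb1, hbT⟩ : ∃ b : ℝ, 1 ≤ b ∧ T ≤ H b := by
    refine ⟨max 1 (T / E 1), le_max_left _ _, ?_⟩
    set b := max 1 (T / E 1)
    have hb1 : (1:ℝ) ≤ b := le_max_left _ _
    have hbT : T / E 1 ≤ b := le_max_right _ _
    have hEb : E 1 ≤ E b := by
      rcases eq_or_lt_of_le hb1 with h | h
      · rw [← h]
      · exact (hEmono (mem_Ici.mpr zero_le_one) (mem_Ici.mpr (by linarith)) h).le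
    calc T = (T / E 1) * E 1 := by field_simp
      _ ≤ b * E 1 := mul_le_mul_of_nonneg_right hbT hE1.le
      _ ≤ (b + k * E b) * E b := by
          apply mul_le_mul (by nlinarith [hEnonneg b (by linarith)]) hEb hE1.le
          nlinarith [hEnonneg b (by linarith : (0:ℝ) ≤ b)]
  -- IVT
  obtain ⟨ξ, hξmem, hξeq⟩ : ∃ ξ ∈ Icc (0:ℝ) b, H ξ = T := by
    have := intermediate_value_Icc (by linarith : (0:ℝ) ≤ b) hHcont.continuousOn
    have hmem : T ∈ Icc (H 0) (H b) := ⟨by rw [hH0]; exact hTpos.le, hbT⟩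
    obtain ⟨ξ, hm, he⟩ := this hmem
    exact ⟨ξ, hm, he⟩
  have hξpos : 0 < ξ := by
    rcases eq_or_lt_of_le hξmem.1 with h | h
    · exfalso; rw [← h, hH0] at hξeq; exact hTpos.ne (by linarith)
    · exact h
  refine ⟨ξ, ⟨hξpos, by rw [hG₁H ξ hξpos, hξeq]⟩, ?_⟩
  rintro y ⟨hy, hyeq⟩
  rw [hG₁H y hy] at hyeq
  exact hHmono.injOn (mem_Ici.mpr hy.le) (mem_Ici.mpr hξpos.le) (by rw [hyeq, hξeq])
end

section
/- Let ρ, c, k, ℓ, γ, D∞ be positive reals, α = k/(ρc), 0 < ε < 1, and let h₀* = (1/D∞)√(γ(1-ε)ρℓk/2). For each h₀ > h₀* let ξ(h₀) > 0 be the unique solution of (D∞c/(ℓ√π))·exp(-x²)/(k/(h₀√(πα)) + erf(x)) = x + (γ(1-ε)√π/(2D∞))·(k/(h₀√(πα)) + erf(x))·exp(x²), and let μ(h₀) = ξ(h₀) + (γk/(2D∞h₀√α))·exp(ξ(h₀)²)·[1 + (h₀√(πα)/k)·erf(ξ(h₀))]. Let ξ∞ > 0 be the unique solution of (G∞(x)/F∞(x))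 = D∞c/(ℓ√π) with F∞(x) = exp(-x²)/erf(x) and G∞(x) = x + (γ(1-ε)√π/(2D∞))·(1/F∞(x)), and let μ∞ = ξ∞ + (γ√π/(2D∞))·exp(ξ∞²)·erf(ξ∞). Then ξ(h₀) → ξ∞ and μ(h₀) → μ∞ as h₀ → +∞. -/
open Real Filter Set Topology

lemma erf_int : ∀ u v : ℝ, IntervalIntegrable (fun t => Real.exp (-t ^ 2)) MeasureTheory.volume u v :=
  fun u v => Continuous.intervalIntegrable (by continuity) u v

section main
variable (A B : ℝ)

/-- auxiliary function -/
noncomputable def Fm (x l : ℝ) : ℝ :=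
  A * Real.exp (-x ^ 2) - (l + erf x) * (x + B * (l + erf x) * Real.exp (x ^ 2))

lemma Fm_anti (hA : 0 < A) (hB : 0 < B) {l : ℝ} (hl : 0 ≤ l) {x y : ℝ}
    (hx : 0 < x) (hxy : x < y) : Fm A B y l < Fm A B x l := by
  have hy : 0 < y := hx.trans hxy
  have he : erf x < erf y := erf_strictMono hxy
  have hex : 0 < erf x := erf_pos hx
  have hsq : x ^ 2 < y ^ 2 := by nlinarith
  have hxp : Real.exp (x ^ 2) < Real.exp (y ^ 2) := Real.exp_lt_exp.2 hsq
  have hxp0 : 0 < Real.exp (x ^ 2) := Real.exp_pos _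
  have h1 : A * Real.exp (-y ^ 2) < A * Real.exp (-x ^ 2) :=
    mul_lt_mul_of_pos_left (Real.exp_lt_exp.2 (by linarith)) hA
  have hB1 : B * (l + erf x) * Real.exp (x ^ 2) < B * (l + erf y) * Real.exp (y ^ 2) := by
    apply mul_lt_mul'' (by nlinarith) hxp (by positivity) hxp0.le
  have h2 : (l + erf x) * (x + B * (l + erf x) * Real.exp (x ^ 2)) <
      (l + erf y) * (y + B * (l + erf y) * Real.exp (y ^ 2)) := by
    apply mul_lt_mul'' (by linarith) (by linarith) (by positivity)
    positivity
  simp only [Fm]; linarith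

lemma Fm_lam (hB : 0 < B) {x : ℝ} (hx : 0 < x) {l1 l2 : ℝ} (hl1 : 0 ≤ l1)
    (hl : l1 < l2) : Fm A B x l2 < Fm A B x l1 := by
  have hex : 0 < erf x := erf_pos hx
  have hxp0 : 0 < Real.exp (x ^ 2) := Real.exp_pos _
  have h2 : (l1 + erf x) * (x + B * (l1 + erf x) * Real.exp (x ^ 2)) <
      (l2 + erf x) * (x + B * (l2 + erf x) * Real.exp (x ^ 2)) := by
    apply mul_lt_mul'' (by linarith) _ (by positivity) (by positivity)
    have : B * (l1 + erf x) * Real.exp (x ^ 2) < B * (l2 + erf x) * Real.exp (x ^ 2) := by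
      apply mul_lt_mul_of_pos_right (by nlinarith) hxp0
    linarith
  simp only [Fm]; linarith

end main

/-- As `h₀ → +∞`, the interface coefficients `ξ(h₀)` and `μ(h₀)` of the convective
problem converge to the coefficients `ξ∞` and `μ∞` of the problem with prescribed
temperature `-D∞` at the fixed face. -/
theorem stmt_9 (ρ c k ℓ γ Dinf α ε h₀star : ℝ)
    (hρ : 0 < ρ) (hc : 0 < c) (hk : 0 < k) (hℓ : 0 < ℓ) (hγ : 0 < γ) (hD : 0 < Dinf)
    (hα : α = k / (ρ * c)) (hε0 : 0 < ε) (hε1 : ε < 1)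
    (hstar : h₀star = (1 / Dinf) * Real.sqrt (γ * (1 - ε) * ρ * ℓ * k / 2))
    (ξ μ : ℝ → ℝ) (ξinf μinf : ℝ)
    -- for each `h₀ > h₀*`, `ξ h₀` is the unique positive solution of the convective equation
    (hξpos : ∀ h₀ > h₀star, 0 < ξ h₀)
    (hξeq : ∀ h₀ > h₀star,
      (Dinf * c / (ℓ * Real.sqrt π)) * Real.exp (-(ξ h₀) ^ 2) /
          (k / (h₀ * Real.sqrt (π * α)) + erf (ξ h₀)) =
        ξ h₀ + (γ * (1 - ε) * Real.sqrt π / (2 * Dinf)) *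
          (k / (h₀ * Real.sqrt (π * α)) + erf (ξ h₀)) * Real.exp ((ξ h₀) ^ 2))
    (hξuniq : ∀ h₀ > h₀star, ∀ y > (0:ℝ),
      (Dinf * c / (ℓ * Real.sqrt π)) * Real.exp (-y ^ 2) /
          (k / (h₀ * Real.sqrt (π * α)) + erf y) =
        y + (γ * (1 - ε) * Real.sqrt π / (2 * Dinf)) *
          (k / (h₀ * Real.sqrt (π * α)) + erf y) * Real.exp (y ^ 2) → y = ξ h₀)
    (hμ : ∀ h₀ > h₀star, μ h₀ = ξ h₀ + (γ * k / (2 * Dinf * h₀ * Real.sqrt α)) *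
      Real.exp ((ξ h₀) ^ 2) * (1 + (h₀ * Real.sqrt (π * α) / k) * erf (ξ h₀)))
    -- `ξ∞` is the unique positive solution of the limit equation `G∞(x)/F∞(x) = D∞c/(ℓ√π)`
    (hξinfpos : 0 < ξinf)
    (hξinfeq : (ξinf + (γ * (1 - ε) * Real.sqrt π / (2 * Dinf)) *
        (erf ξinf / Real.exp (-ξinf ^ 2))) / (Real.exp (-ξinf ^ 2) / erf ξinf) =
      Dinf * c / (ℓ * Real.sqrt π))
    (hξinfuniq : ∀ y > (0:ℝ),
      (y + (γ * (1 - ε) * Real.sqrt π / (2 * Dinf)) *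
          (erf y / Real.exp (-y ^ 2))) / (Real.exp (-y ^ 2) / erf y) =
        Dinf * c / (ℓ * Real.sqrt π) → y = ξinf)
    (hμinf : μinf = ξinf + (γ * Real.sqrt π / (2 * Dinf)) * Real.exp (ξinf ^ 2) * erf ξinf) :
    Tendsto ξ atTop (nhds ξinf) ∧ Tendsto μ atTop (nhds μinf) := by
  have hα0 : 0 < α := by rw [hα]; positivity
  have h1ε : 0 < 1 - ε := by linarith
  have hπ : 0 < Real.sqrt π := Real.sqrt_pos.2 Real.pi_pos
  set A := Dinf * c / (ℓ * Real.sqrt π) with hA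
  set B := γ * (1 - ε) * Real.sqrt π / (2 * Dinf) with hB
  have hApos : 0 < A := by rw [hA]; positivity
  have hBpos : 0 < B := by rw [hB]; positivity
  set lam : ℝ → ℝ := fun h₀ => k / (h₀ * Real.sqrt (π * α)) with hlam
  have hsπα : 0 < Real.sqrt (π * α) := Real.sqrt_pos.2 (by positivity)
  have hlampos : ∀ h₀ : ℝ, 0 < h₀ → 0 < lam h₀ := fun h₀ hh => by
    simp only [hlam]; positivity
  -- lam → 0
  have hlam0 : Tendsto lam atTop (𝓝 0) := by
    have h1 : Tendsto (fun h₀ : ℝ => (k / Real.sqrt (π * α)) * h₀⁻¹) atTop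
        (𝓝 ((k / Real.sqrt (π * α)) * 0)) := tendsto_inv_atTop_zero.const_mul _
    rw [mul_zero] at h1
    refine h1.congr fun h₀ => ?_
    simp only [hlam, div_eq_mul_inv, mul_inv]; ring
  -- F(ξ h₀, lam h₀) = 0
  have hFξ : ∀ h₀ : ℝ, h₀star < h₀ → 0 < h₀ → Fm A B (ξ h₀) (lam h₀) = 0 := by
    intro h₀ hh hh0
    have heq := hξeq h₀ hh
    have hd : 0 < lam h₀ + erf (ξ h₀) := by
      have := erf_pos (hξpos h₀ hh); have := hlampos h₀ hh0; simp only [hlam] at *; linarith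
    rw [div_eq_iff hd.ne'] at heq
    simp only [Fm]
    linear_combination heq
  -- F(ξinf, 0) = 0
  have hF0 : Fm A B ξinf 0 = 0 := by
    have he : 0 < erf ξinf := erf_pos hξinfpos
    have hE : 0 < Real.exp (-ξinf ^ 2) := Real.exp_pos _
    rw [div_eq_iff (by positivity : (Real.exp (-ξinf ^ 2) / erf ξinf) ≠ 0)] at hξinfeq
    simp only [Fm, zero_add]
    have hEE : Real.exp (-ξinf ^ 2) * Real.exp (ξinf ^ 2) = 1 := by
      rw [← Real.exp_add]; simp
    field_simp at hξinfeq
    linear_combination (-Real.exp (ξinf ^ 2)) * hξinfeq +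
      (ξinf * erf ξinf - A * Real.exp (-ξinf ^ 2)) * hEE
  -- eventual positivity of h₀
  have hupper : ∀ h₀ : ℝ, h₀star < h₀ → 0 < h₀ → ξ h₀ < ξinf := by
    intro h₀ hh hh0
    by_contra hcon
    push_neg at hcon
    have hl0 : 0 < lam h₀ := hlampos h₀ hh0
    have hFlt : Fm A B ξinf (lam h₀) < 0 := by
      have := Fm_lam A B hBpos hξinfpos le_rfl hl0
      rw [hF0] at this; exact this
    rcases eq_or_lt_of_le hcon with h | h
    · rw [h] at hFlt; rw [hFξ h₀ hh hh0] at hFlt; exact lt_irrefl 0 hFlt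
    · have := Fm_anti A B hApos hBpos hl0.le hξinfpos h
      rw [hFξ h₀ hh hh0] at this; linarith
  have hev : ∀ᶠ h₀ in (atTop : Filter ℝ), h₀star < h₀ ∧ 0 < h₀ :=
    (eventually_gt_atTop h₀star).and (eventually_gt_atTop 0)
  -- Tendsto ξ
  have htξ : Tendsto ξ atTop (𝓝 ξinf) := by
    rw [tendsto_order]
    constructor
    · intro a ha
      set x₀ := max a (ξinf / 2) with hx₀
      have hx₀pos : 0 < x₀ := lt_max_of_lt_right (by linarith)
      have hx₀lt : x₀ < ξinf := max_lt ha (by linarith)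
      have hFx₀ : 0 < Fm A B x₀ 0 := by
        have := Fm_anti A B hApos hBpos le_rfl hx₀pos hx₀lt
        rw [hF0] at this; exact this
      have hcont : ContinuousAt (fun l => Fm A B x₀ l) 0 := by
        simp only [Fm]; fun_prop
      have h1 : ∀ᶠ l in 𝓝 (0:ℝ), 0 < Fm A B x₀ l :=
        hcont.eventually (eventually_gt_nhds hFx₀)
      have h2 : ∀ᶠ h₀ in (atTop : Filter ℝ), 0 < Fm A B x₀ (lam h₀) := hlam0.eventually h1
      filter_upwards [h2, hev] with h₀ hFp ⟨hh, hh0⟩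
      have : x₀ < ξ h₀ := by
        by_contra hcon
        push_neg at hcon
        rcases eq_or_lt_of_le hcon with h | h
        · rw [← h] at hFp; rw [hFξ h₀ hh hh0] at hFp; exact lt_irrefl 0 hFp
        · have := Fm_anti A B hApos hBpos (hlampos h₀ hh0).le (hξpos h₀ hh) h
          rw [hFξ h₀ hh hh0] at this; linarith
      exact lt_of_le_of_lt (le_max_left a _) this
    · intro a ha
      filter_upwards [hev] with h₀ ⟨hh, hh0⟩
      exact (hupper h₀ hh hh0).trans ha
  refine ⟨htξ, ?_⟩
  -- μ part
  have hμev : ∀ᶠ h₀ in (atTop : Filter ℝ),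
      (fun h₀ => ξ h₀ + (γ * k / (2 * Dinf * Real.sqrt α)) * h₀⁻¹ * Real.exp ((ξ h₀) ^ 2)
        + (γ * Real.sqrt π / (2 * Dinf)) * Real.exp ((ξ h₀) ^ 2) * erf (ξ h₀)) h₀ = μ h₀ := by
    filter_upwards [hev] with h₀ ⟨hh, hh0⟩
    rw [hμ h₀ hh]
    have hsα : 0 < Real.sqrt α := Real.sqrt_pos.2 hα0
    have hπα : Real.sqrt (π * α) = Real.sqrt π * Real.sqrt α :=
      Real.sqrt_mul Real.pi_pos.le α
    rw [hπα]
    field_simp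
    ring
  have htexp : Tendsto (fun h₀ => Real.exp ((ξ h₀) ^ 2)) atTop (𝓝 (Real.exp (ξinf ^ 2))) :=
    (Real.continuous_exp.tendsto _).comp (((continuous_pow 2).tendsto _).comp htξ)
  have hterf : Tendsto (fun h₀ => erf (ξ h₀)) atTop (𝓝 (erf ξinf)) :=
    (erf_continuous.tendsto _).comp htξ
  have htmid : Tendsto (fun h₀ : ℝ => (γ * k / (2 * Dinf * Real.sqrt α)) * h₀⁻¹ *
      Real.exp ((ξ h₀) ^ 2)) atTop (𝓝 0) := by
    have := (tendsto_inv_atTop_zero.const_mul (γ * k / (2 * Dinf * Real.sqrt α))).mul htexp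
    simpa using this
  have htall := (htξ.add htmid).add
    ((tendsto_const_nhds (x := γ * Real.sqrt π / (2 * Dinf))).mul htexp |>.mul hterf)
  rw [add_zero] at htall
  rw [hμinf]
  exact htall.congr' hμev
end

section
/- Under the setting of the preceding convergence result (with ξ(h₀), μ(h₀), ξ∞, μ∞ defined as above), for every t > 0 one has s(t,h₀) = 2ξ(h₀)√(αt) → s∞(t) = 2ξ∞√(αt) and r(t,h₀) = 2μ(h₀)√(αt) → r∞(t) = 2μ∞√(αt) as h₀ → +∞; moreover, for every t > 0 and every x with 0 < x < s∞(t), the temperature T(x,t,h₀) = -(h₀D∞√(πα)/k)·erf(ξ(h₀))/(1 + (h₀√(πα)/k)·erf(ξ(h₀)))·[1 - erf(x/(2√(αt)))/erf(ξ(h₀))] converges to T∞(x,t) = -D∞[1 - erf(x/(2√(αt)))/erf(ξ∞)] as h₀ → +∞. -/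
open Real Filter Set Topology

/-- Strict comparison of the two sides of the transcendental equation. -/
lemma key_mono {C A : ℝ} (hC : 0 < C) (hA : 0 < A) {d₁ d₂ x y : ℝ}
    (hd₁ : 0 ≤ d₁) (hd : d₁ < d₂) (hx : 0 < x) (hxy : x ≤ y) :
    C * Real.exp (-y ^ 2) / (d₂ + erf y) - (y + A * (d₂ + erf y) * Real.exp (y ^ 2))
      < C * Real.exp (-x ^ 2) / (d₁ + erf x) - (x + A * (d₁ + erf x) * Real.exp (x ^ 2)) := by
  have he1 : erf x ≤ erf y := erf_strictMono.monotone hxy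
  have he0 : 0 < erf x := erf_pos hx
  have hb1 : 0 < d₁ + erf x := by linarith
  have hb2 : 0 < d₂ + erf y := by linarith
  have ha : Real.exp (-y ^ 2) ≤ Real.exp (-x ^ 2) := by
    apply Real.exp_le_exp.2; nlinarith
  have ha2 : Real.exp (x ^ 2) ≤ Real.exp (y ^ 2) := by
    apply Real.exp_le_exp.2; nlinarith
  have hap : 0 < Real.exp (-y ^ 2) := Real.exp_pos _
  have hap2 : 0 < Real.exp (x ^ 2) := Real.exp_pos _
  have h1 : C * Real.exp (-y ^ 2) / (d₂ + erf y) < C * Real.exp (-x ^ 2) / (d₁ + erf x) := by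
    rw [div_lt_div_iff₀ hb2 hb1]
    have s1 : C * Real.exp (-y ^ 2) * (d₁ + erf x) ≤ C * Real.exp (-x ^ 2) * (d₁ + erf x) := by
      nlinarith [mul_nonneg (mul_pos hC hb1).le (sub_nonneg.2 ha)]
    have s2 : C * Real.exp (-x ^ 2) * (d₁ + erf x) < C * Real.exp (-x ^ 2) * (d₂ + erf y) := by
      nlinarith [mul_pos (mul_pos hC (Real.exp_pos (-x ^ 2)))
        (show (0:ℝ) < d₂ + erf y - (d₁ + erf x) by linarith)]
    linarith
  have h2 : x + A * (d₁ + erf x) * Real.exp (x ^ 2)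
      < y + A * (d₂ + erf y) * Real.exp (y ^ 2) := by
    have t1 : A * (d₁ + erf x) * Real.exp (x ^ 2) ≤ A * (d₁ + erf x) * Real.exp (y ^ 2) := by
      nlinarith [mul_nonneg (mul_nonneg hA.le hb1.le) (sub_nonneg.2 ha2)]
    have t2 : A * (d₁ + erf x) * Real.exp (y ^ 2) < A * (d₂ + erf y) * Real.exp (y ^ 2) := by
      nlinarith [mul_pos (mul_pos hA (Real.exp_pos (y ^ 2)))
        (show (0:ℝ) < d₂ + erf y - (d₁ + erf x) by linarith)]
    linarith
  linarith

/-- As `h₀ → +∞`, the free boundaries `s(t,h₀) = 2ξ(h₀)√(αt)`, `r(t,h₀) = 2μ(h₀)√(αt)`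
and the temperature `T(x,t,h₀)` of the convective problem converge to the free boundaries
`s∞(t)`, `r∞(t)` and the temperature `T∞(x,t)` of the problem with prescribed temperature
`-D∞` at the fixed face. -/
theorem stmt_10 (ρ c k ℓ γ Dinf α ε h₀star : ℝ)
    (hρ : 0 < ρ) (hc : 0 < c) (hk : 0 < k) (hℓ : 0 < ℓ) (hγ : 0 < γ) (hD : 0 < Dinf)
    (hα : α = k / (ρ * c)) (hε0 : 0 < ε) (hε1 : ε < 1)
    (hstar : h₀star = (1 / Dinf) * Real.sqrt (γ * (1 - ε) * ρ * ℓ * k / 2))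
    (ξ μ : ℝ → ℝ) (ξinf μinf : ℝ)
    (hξpos : ∀ h₀ > h₀star, 0 < ξ h₀)
    (hξeq : ∀ h₀ > h₀star,
      (Dinf * c / (ℓ * Real.sqrt π)) * Real.exp (-(ξ h₀) ^ 2) /
          (k / (h₀ * Real.sqrt (π * α)) + erf (ξ h₀)) =
        ξ h₀ + (γ * (1 - ε) * Real.sqrt π / (2 * Dinf)) *
          (k / (h₀ * Real.sqrt (π * α)) + erf (ξ h₀)) * Real.exp ((ξ h₀) ^ 2))
    (hξuniq : ∀ h₀ > h₀star, ∀ y > (0:ℝ),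
      (Dinf * c / (ℓ * Real.sqrt π)) * Real.exp (-y ^ 2) /
          (k / (h₀ * Real.sqrt (π * α)) + erf y) =
        y + (γ * (1 - ε) * Real.sqrt π / (2 * Dinf)) *
          (k / (h₀ * Real.sqrt (π * α)) + erf y) * Real.exp (y ^ 2) → y = ξ h₀)
    (hμ : ∀ h₀ > h₀star, μ h₀ = ξ h₀ + (γ * k / (2 * Dinf * h₀ * Real.sqrt α)) *
      Real.exp ((ξ h₀) ^ 2) * (1 + (h₀ * Real.sqrt (π * α) / k) * erf (ξ h₀)))
    (hξinfpos : 0 < ξinf)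
    (hξinfeq : (ξinf + (γ * (1 - ε) * Real.sqrt π / (2 * Dinf)) *
        (erf ξinf / Real.exp (-ξinf ^ 2))) / (Real.exp (-ξinf ^ 2) / erf ξinf) =
      Dinf * c / (ℓ * Real.sqrt π))
    (hξinfuniq : ∀ y > (0:ℝ),
      (y + (γ * (1 - ε) * Real.sqrt π / (2 * Dinf)) *
          (erf y / Real.exp (-y ^ 2))) / (Real.exp (-y ^ 2) / erf y) =
        Dinf * c / (ℓ * Real.sqrt π) → y = ξinf)
    (hμinf : μinf = ξinf + (γ * Real.sqrt π / (2 * Dinf)) * Real.exp (ξinf ^ 2) * erf ξinf) :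
    ∀ t > (0:ℝ),
      Tendsto (fun h₀ => 2 * ξ h₀ * Real.sqrt (α * t)) atTop
        (nhds (2 * ξinf * Real.sqrt (α * t))) ∧
      Tendsto (fun h₀ => 2 * μ h₀ * Real.sqrt (α * t)) atTop
        (nhds (2 * μinf * Real.sqrt (α * t))) ∧
      ∀ x, 0 < x → x < 2 * ξinf * Real.sqrt (α * t) →
        Tendsto (fun h₀ =>
            -(h₀ * Dinf * Real.sqrt (π * α) / k) *
              (erf (ξ h₀) / (1 + (h₀ * Real.sqrt (π * α) / k) * erf (ξ h₀))) *
              (1 - erf (x / (2 * Real.sqrt (α * t))) / erf (ξ h₀))) atTop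
          (nhds (-Dinf * (1 - erf (x / (2 * Real.sqrt (α * t))) / erf ξinf))) := by
  have hπ : (0:ℝ) < Real.sqrt π := Real.sqrt_pos.2 Real.pi_pos
  have h1ε : (0:ℝ) < 1 - ε := by linarith
  have hαpos : 0 < α := by rw [hα]; positivity
  have hsqα : 0 < Real.sqrt (π * α) := Real.sqrt_pos.2 (mul_pos Real.pi_pos hαpos)
  set C := Dinf * c / (ℓ * Real.sqrt π) with hCdef
  set A := γ * (1 - ε) * Real.sqrt π / (2 * Dinf) with hAdef
  have hCpos : 0 < C := by rw [hCdef]; positivity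
  have hApos : 0 < A := by rw [hAdef]; positivity
  have hstarpos : 0 < h₀star := by
    rw [hstar]
    have h1 : 0 < γ * (1 - ε) * ρ * ℓ * k / 2 := by positivity
    exact mul_pos (by positivity) (Real.sqrt_pos.2 h1)
  have hepos : 0 < erf ξinf := erf_pos hξinfpos
  have hq : Real.exp (ξinf ^ 2) = (Real.exp (-ξinf ^ 2))⁻¹ := by
    rw [Real.exp_neg, inv_inv]
  -- the prescribed-temperature equation, in the same shape as `hξeq`
  have h1inf : ξinf + A * (erf ξinf / Real.exp (-ξinf ^ 2))
      = C * (Real.exp (-ξinf ^ 2) / erf ξinf) :=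
    (div_eq_iff (by positivity)).1 hξinfeq
  have hinf0 : C * Real.exp (-ξinf ^ 2) / (0 + erf ξinf)
      = ξinf + A * (0 + erf ξinf) * Real.exp (ξinf ^ 2) := by
    rw [zero_add, mul_div_assoc, ← h1inf, hq]; ring
  -- upper bound : ξ h < ξinf
  have hub : ∀ h > h₀star, ξ h < ξinf := by
    intro h hh
    by_contra hle
    push_neg at hle
    have hdpos : 0 < k / (h * Real.sqrt (π * α)) :=
      div_pos hk (mul_pos (hstarpos.trans hh) hsqα)
    have hKey := key_mono hCpos hApos (le_refl (0:ℝ)) hdpos hξinfpos hle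
    have e1 := hξeq h hh
    linarith
  -- monotonicity : ξ is strictly increasing on (h₀star, ∞)
  have hmono : ∀ h₁ h₂ : ℝ, h₀star < h₁ → h₁ < h₂ → ξ h₁ < ξ h₂ := by
    intro h₁ h₂ hh₁ h12
    by_contra hle
    push_neg at hle
    have hp1 : 0 < h₁ := hstarpos.trans hh₁
    have hp2 : 0 < h₂ := hp1.trans h12
    have hd2pos : 0 < k / (h₂ * Real.sqrt (π * α)) := div_pos hk (mul_pos hp2 hsqα)
    have hdlt : k / (h₂ * Real.sqrt (π * α)) < k / (h₁ * Real.sqrt (π * α)) := by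
      apply div_lt_div_of_pos_left hk (mul_pos hp1 hsqα)
      exact mul_lt_mul_of_pos_right h12 hsqα
    have hKey := key_mono hCpos hApos hd2pos.le hdlt (hξpos h₂ (hh₁.trans h12)) hle
    have e1 := hξeq h₁ hh₁
    have e2 := hξeq h₂ (hh₁.trans h12)
    linarith
  -- the limit L of ξ
  set S := ξ '' Ioi h₀star with hS
  have hSne : S.Nonempty := ⟨ξ (h₀star + 1), mem_image_of_mem _ (mem_Ioi.2 (lt_add_one _))⟩
  have hSbdd : BddAbove S := by
    refine ⟨ξinf, fun y hy => ?_⟩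
    obtain ⟨h, hh, rfl⟩ := hy
    exact (hub h hh).le
  set L := sSup S with hL
  have hLub : ∀ h > h₀star, ξ h ≤ L := fun h hh =>
    le_csSup hSbdd (mem_image_of_mem _ hh)
  have hLle : L ≤ ξinf := by
    refine csSup_le hSne (fun y hy => ?_)
    obtain ⟨h, hh, rfl⟩ := hy
    exact (hub h hh).le
  have hLpos : 0 < L :=
    lt_of_lt_of_le (hξpos (h₀star + 1) (by linarith)) (hLub _ (by linarith))
  have hξtend : Tendsto ξ atTop (nhds L) := by
    rw [Metric.tendsto_atTop]
    intro δ hδ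
    obtain ⟨y, hy, hy2⟩ := exists_lt_of_lt_csSup hSne (show L - δ < L by linarith)
    obtain ⟨h, hh, rfl⟩ := hy
    refine ⟨max (h + 1) (h₀star + 1), fun n hn => ?_⟩
    have hn1 : h < n := by
      have := le_trans (le_max_left (h + 1) (h₀star + 1)) hn; linarith
    have hn2 : h₀star < n := by
      have := le_trans (le_max_right (h + 1) (h₀star + 1)) hn; linarith
    have m1 := hmono h n hh hn1
    have m2 := hLub n hn2
    rw [Real.dist_eq, abs_lt]
    constructor <;> linarith
  -- pass to the limit in the equation to identify L = ξinf
  have herfc : Tendsto (fun h => erf (ξ h)) atTop (nhds (erf L)) :=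
    (erf_continuous.tendsto L).comp hξtend
  have hexpc : Tendsto (fun h => Real.exp (-(ξ h) ^ 2)) atTop (nhds (Real.exp (-L ^ 2))) :=
    (((continuous_pow 2).neg.rexp).tendsto L).comp hξtend
  have hexpc2 : Tendsto (fun h => Real.exp ((ξ h) ^ 2)) atTop (nhds (Real.exp (L ^ 2))) :=
    (((continuous_pow 2).rexp).tendsto L).comp hξtend
  have hδt : Tendsto (fun h : ℝ => k / (h * Real.sqrt (π * α))) atTop (nhds 0) :=
    tendsto_const_nhds.div_atTop (Tendsto.atTop_mul_const hsqα tendsto_id)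
  have herfLpos : 0 < erf L := erf_pos hLpos
  have hLHS : Tendsto (fun h => C * Real.exp (-(ξ h) ^ 2) /
      (k / (h * Real.sqrt (π * α)) + erf (ξ h))) atTop
      (nhds (C * Real.exp (-L ^ 2) / (0 + erf L))) :=
    (tendsto_const_nhds.mul hexpc).div (hδt.add herfc) (by positivity)
  have hRHS : Tendsto (fun h => ξ h + A * (k / (h * Real.sqrt (π * α)) + erf (ξ h)) *
      Real.exp ((ξ h) ^ 2)) atTop
      (nhds (L + A * (0 + erf L) * Real.exp (L ^ 2))) :=
    hξtend.add ((tendsto_const_nhds.mul (hδt.add herfc)).mul hexpc2)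
  have hev : (fun h => C * Real.exp (-(ξ h) ^ 2) /
      (k / (h * Real.sqrt (π * α)) + erf (ξ h))) =ᶠ[atTop]
      (fun h => ξ h + A * (k / (h * Real.sqrt (π * α)) + erf (ξ h)) * Real.exp ((ξ h) ^ 2)) := by
    filter_upwards [eventually_gt_atTop h₀star] with h hh
    exact hξeq h hh
  have heql : C * Real.exp (-L ^ 2) / (0 + erf L) = L + A * (0 + erf L) * Real.exp (L ^ 2) :=
    tendsto_nhds_unique (hLHS.congr' hev) hRHS
  have hqL : Real.exp (L ^ 2) = (Real.exp (-L ^ 2))⁻¹ := by rw [Real.exp_neg, inv_inv]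
  have hgoal : (L + A * (erf L / Real.exp (-L ^ 2))) / (Real.exp (-L ^ 2) / erf L) = C := by
    rw [div_eq_iff (show Real.exp (-L ^ 2) / erf L ≠ 0 by positivity)]
    rw [zero_add, mul_div_assoc] at heql
    rw [heql, hqL]; ring
  have hLeq : L = ξinf := hξinfuniq L hLpos hgoal
  rw [hLeq] at hξtend herfc hexpc hexpc2 herfLpos
  -- auxiliary positivity for the last part
  have herfbound : ∀ h ≥ h₀star + 1, erf (ξ (h₀star + 1)) ≤ erf (ξ h) := by
    intro h hh
    rcases eq_or_lt_of_le hh with rfl | hlt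
    · exact le_refl _
    · exact (erf_strictMono (hmono _ _ (by linarith) hlt)).le
  intro t ht
  refine ⟨(hξtend.const_mul 2).mul_const _, ?_, ?_⟩
  · -- the coefficient μ
    have h1t : Tendsto (fun h : ℝ => ξ h + γ * k / (2 * Dinf * Real.sqrt α) * h⁻¹ *
        Real.exp ((ξ h) ^ 2) + γ * Real.sqrt π / (2 * Dinf) * Real.exp ((ξ h) ^ 2) * erf (ξ h))
        atTop (nhds (ξinf + γ * k / (2 * Dinf * Real.sqrt α) * 0 * Real.exp (ξinf ^ 2)
          + γ * Real.sqrt π / (2 * Dinf) * Real.exp (ξinf ^ 2) * erf ξinf)) :=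
      (hξtend.add ((tendsto_const_nhds.mul tendsto_inv_atTop_zero).mul hexpc2)).add
        ((tendsto_const_nhds.mul hexpc2).mul herfc)
    have hev2 : (fun h : ℝ => ξ h + γ * k / (2 * Dinf * Real.sqrt α) * h⁻¹ *
        Real.exp ((ξ h) ^ 2) + γ * Real.sqrt π / (2 * Dinf) * Real.exp ((ξ h) ^ 2) * erf (ξ h))
        =ᶠ[atTop] μ := by
      filter_upwards [eventually_gt_atTop h₀star] with h hh
      rw [hμ h hh]
      have hhpos : 0 < h := hstarpos.trans hh
      have hsπα : Real.sqrt (π * α) = Real.sqrt π * Real.sqrt α :=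
        Real.sqrt_mul Real.pi_pos.le α
      have hsqa : 0 < Real.sqrt α := Real.sqrt_pos.2 hαpos
      rw [hsπα]
      field_simp
      ring
    have hval : ξinf + γ * k / (2 * Dinf * Real.sqrt α) * 0 * Real.exp (ξinf ^ 2)
        + γ * Real.sqrt π / (2 * Dinf) * Real.exp (ξinf ^ 2) * erf ξinf = μinf := by
      rw [hμinf]; ring
    have hμt : Tendsto μ atTop (nhds μinf) := hval ▸ h1t.congr' hev2
    exact (hμt.const_mul 2).mul_const _
  · -- the temperature
    intro x hx hxs
    set E := erf (x / (2 * Real.sqrt (α * t))) with hE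
    have hbt : Tendsto (fun h : ℝ => h * Real.sqrt (π * α) / k * erf (ξ h)) atTop atTop := by
      have h0 : Tendsto (fun h : ℝ => h * (Real.sqrt (π * α) / k * erf (ξ h))) atTop atTop :=
        Tendsto.atTop_mul_pos (by positivity : 0 < Real.sqrt (π * α) / k * erf ξinf) tendsto_id
          (tendsto_const_nhds.mul herfc)
      exact h0.congr (fun h => by ring)
    have h1b : Tendsto (fun h : ℝ => 1 + h * Real.sqrt (π * α) / k * erf (ξ h)) atTop atTop :=
      tendsto_atTop_add_const_left _ 1 hbt
    have hqt : Tendsto (fun h : ℝ => h * Real.sqrt (π * α) / k * erf (ξ h) /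
        (1 + h * Real.sqrt (π * α) / k * erf (ξ h))) atTop (nhds 1) := by
      have h2 : Tendsto (fun h : ℝ => 1 - 1 / (1 + h * Real.sqrt (π * α) / k * erf (ξ h)))
          atTop (nhds (1 - 0)) :=
        tendsto_const_nhds.sub (tendsto_const_nhds.div_atTop h1b)
      rw [sub_zero] at h2
      refine h2.congr' ?_
      filter_upwards [hbt.eventually_gt_atTop 0] with h hh
      have hne : (1 : ℝ) + h * Real.sqrt (π * α) / k * erf (ξ h) ≠ 0 := by linarith
      rw [one_sub_div hne, add_sub_cancel_left]
    have hT : Tendsto (fun h : ℝ => -Dinf * (h * Real.sqrt (π * α) / k * erf (ξ h) /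
        (1 + h * Real.sqrt (π * α) / k * erf (ξ h))) * (1 - E / erf (ξ h))) atTop
        (nhds (-Dinf * 1 * (1 - E / erf ξinf))) :=
      (tendsto_const_nhds.mul hqt).mul
        (tendsto_const_nhds.sub (tendsto_const_nhds.div herfc (ne_of_gt herfLpos)))
    rw [mul_one] at hT
    exact hT.congr (fun h => by ring)
end

section
/- Let c, ℓ, γ, D₀ be positive reals and 0 < ε < 1. Define F∞(x) = exp(-x²)/erf(x), G₀(x) = x + (γ(1-ε)√π/(2D₀)) · (1/F∞(x)), and G₂(x) = G₀(x)/F∞(x) for x > 0. Then the equation G₂(x) = D₀c/(ℓ√π) has a unique solution x > 0. -/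
open Real Filter Set Topology

noncomputable def gfun (x : ℝ) : ℝ := erf x * Real.exp (x ^ 2)

lemma gfun_continuous : Continuous gfun :=
  erf_continuous.mul (Real.continuous_exp.comp (by continuity))

lemma gfun_zero : gfun 0 = 0 := by simp [gfun, erf_zero]

lemma gfun_strictMonoOn : StrictMonoOn gfun (Set.Ici 0) := by
  intro x hx y _ hxy
  have h1 : erf x < erf y := erf_strictMono hxy
  have h2 : Real.exp (x ^ 2) ≤ Real.exp (y ^ 2) := by
    apply Real.exp_le_exp.2
    nlinarith [hx.out, hxy]
  have h3 : 0 ≤ erf x := by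
    rcases eq_or_lt_of_le hx.out with h | h
    · simp [← h, erf_zero]
    · exact (erf_pos h).le
  have := Real.exp_pos (x ^ 2)
  calc gfun x = erf x * Real.exp (x ^ 2) := rfl
    _ < erf y * Real.exp (y ^ 2) := by nlinarith [Real.exp_pos (y^2)]
    _ = gfun y := rfl

lemma gfun_nonneg {x : ℝ} (hx : 0 ≤ x) : 0 ≤ gfun x := by
  rcases eq_or_lt_of_le hx with h | h
  · simp [← h, gfun_zero]
  · exact mul_nonneg (erf_pos h).le (Real.exp_pos _).le

/-- The equation `G₂(x) = D₀ c/(ℓ√π)` determining the interface coefficient for the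
mushy-zone model with prescribed temperature `-D₀` at the fixed face has a unique
positive solution. -/
theorem stmt_12 (c ℓ γ D₀ ε : ℝ) (hc : 0 < c) (hℓ : 0 < ℓ) (hγ : 0 < γ)
    (hD : 0 < D₀) (hε0 : 0 < ε) (hε1 : ε < 1)
    (Finf G₀ G₂ : ℝ → ℝ)
    (hFinf : ∀ x, Finf x = Real.exp (-x ^ 2) / erf x)
    (hG₀ : ∀ x, G₀ x = x + (γ * (1 - ε) * Real.sqrt π / (2 * D₀)) * (1 / Finf x))
    (hG₂ : ∀ x, G₂ x = G₀ x / Finf x) :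
    ∃! ξ : ℝ, ξ > 0 ∧ G₂ ξ = D₀ * c / (ℓ * Real.sqrt π) := by
  set A : ℝ := γ * (1 - ε) * Real.sqrt π / (2 * D₀) with hA
  have hπ : 0 < Real.sqrt π := Real.sqrt_pos.2 Real.pi_pos
  have hApos : 0 < A := by
    apply div_pos _ (by positivity)
    have : 0 < 1 - ε := by linarith
    positivity
  set h : ℝ → ℝ := fun x => (x + A * gfun x) * gfun x with hh
  -- G₂ agrees with h on positives
  have hG2h : ∀ x : ℝ, 0 < x → G₂ x = h x := by
    intro x hx
    have he : erf x ≠ 0 := (erf_pos hx).ne'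
    have hex : Real.exp (-x ^ 2) ≠ 0 := (Real.exp_pos _).ne'
    have hinv : 1 / Finf x = gfun x := by
      rw [hFinf, gfun, Real.exp_neg]
      field_simp
    rw [hG₂, div_eq_mul_one_div, hinv, hG₀, hinv]
  have hcont : Continuous h := by
    apply Continuous.mul _ gfun_continuous
    exact continuous_id.add (continuous_const.mul gfun_continuous)
  have hmono : StrictMonoOn h (Set.Ici 0) := by
    intro x hx y hy hxy
    have hg := gfun_strictMonoOn hx hy hxy
    have h1 : x + A * gfun x < y + A * gfun y := by nlinarith
    exact mul_lt_mul'' h1 hg (add_nonneg hx.out (mul_nonneg hApos.le (gfun_nonneg hx.out))) (gfun_nonneg hx.out)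
  set k : ℝ := D₀ * c / (ℓ * Real.sqrt π) with hk
  have hkpos : 0 < k := by positivity
  -- find b with h b > k
  have htop : Tendsto h atTop atTop := by
    apply tendsto_atTop_mono' atTop (show ∀ᶠ x in atTop, x * gfun 1 ≤ h x from ?_)
    · exact Tendsto.atTop_mul_const (by simpa [gfun_zero] using gfun_strictMonoOn (le_refl (0:ℝ)) (Set.mem_Ici.2 zero_le_one) one_pos) tendsto_id
    · filter_upwards [eventually_ge_atTop (1:ℝ)] with x hx1
      have hg1 : gfun 1 ≤ gfun x := by
        rcases eq_or_lt_of_le hx1 with h | h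
        · rw [← h]
        · exact (gfun_strictMonoOn (Set.mem_Ici.2 zero_le_one) (Set.mem_Ici.2 (by linarith)) h).le
      have hx0 : (0:ℝ) ≤ x := by linarith
      have := gfun_nonneg hx0
      have hg1' : 0 ≤ gfun 1 := gfun_nonneg zero_le_one
      calc x * gfun 1 ≤ x * gfun x := by nlinarith
        _ ≤ (x + A * gfun x) * gfun x := by nlinarith [mul_nonneg hApos.le (mul_nonneg this this)]
  obtain ⟨b, hb⟩ := (htop.eventually (eventually_ge_atTop (k+1))).and (eventually_ge_atTop (1:ℝ)) |>.exists
  have hb1 : (1:ℝ) ≤ b := hb.2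
  have hbk : k ≤ h b := by linarith [hb.1]
  have h0 : h 0 = 0 := by simp [hh, gfun_zero]
  obtain ⟨ξ, hξmem, hξ⟩ : ∃ ξ ∈ Set.Icc (0:ℝ) b, h ξ = k := by
    have := intermediate_value_Icc (by linarith : (0:ℝ) ≤ b) hcont.continuousOn
    exact this ⟨by rw [h0]; exact hkpos.le, hbk⟩
  have hξpos : 0 < ξ := by
    rcases eq_or_lt_of_le hξmem.1 with h | h
    · exfalso; rw [← h] at hξ; rw [h0] at hξ; linarith
    · exact h
  refine ⟨ξ, ⟨hξpos, by rw [hG2h ξ hξpos, hξ]⟩, ?_⟩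
  rintro y ⟨hy, hyk⟩
  rw [hG2h y hy] at hyk
  exact hmono.injOn (Set.mem_Ici.2 hy.le) (Set.mem_Ici.2 hξpos.le) (by rw [hyk, hξ])
end

section
/- Let ρ, c, k, ℓ, γ, D∞ be positive reals, α = k/(ρc), 0 < ε < 1, and suppose h₀ > (1/D∞)√(γ(1-ε)ρℓk/2). Let ξ > 0 be the unique solution of (D∞c/(ℓ√π))·exp(-x²)/(k/(h₀√(πα)) + erf(x)) = x + (γ(1-ε)√π/(2D∞))·(k/(h₀√(πα)) + erf(x))·exp(x²), and set D₀ = D∞·erf(ξ)/(k/(h₀√(πα)) + erf(ξ)). Then D∞ > D₀ and erf(ξ) < (D∞D₀/(D∞ - D₀))·√(2c/(πγ(1-ε)ℓ)). -/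
open Real Filter Set Topology

set_option maxHeartbeats 1000000 in
/-- Inequality for the interface coefficient of the convective problem:
`D∞ > D₀` and `erf ξ < (D∞D₀/(D∞ - D₀))·√(2c/(πγ(1-ε)ℓ))`. -/
theorem stmt_14 (ρ c k ℓ γ Dinf h₀ α ε ξ D₀ : ℝ)
    (hρ : 0 < ρ) (hc : 0 < c) (hk : 0 < k) (hℓ : 0 < ℓ) (hγ : 0 < γ) (hD : 0 < Dinf)
    (hα : α = k / (ρ * c)) (hε0 : 0 < ε) (hε1 : ε < 1)
    (hh : h₀ > (1 / Dinf) * Real.sqrt (γ * (1 - ε) * ρ * ℓ * k / 2))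
    (hξpos : 0 < ξ)
    (hξeq : (Dinf * c / (ℓ * Real.sqrt π)) * Real.exp (-ξ ^ 2) /
        (k / (h₀ * Real.sqrt (π * α)) + erf ξ) =
      ξ + (γ * (1 - ε) * Real.sqrt π / (2 * Dinf)) *
        (k / (h₀ * Real.sqrt (π * α)) + erf ξ) * Real.exp (ξ ^ 2))
    (hξuniq : ∀ y > (0:ℝ),
      (Dinf * c / (ℓ * Real.sqrt π)) * Real.exp (-y ^ 2) /
          (k / (h₀ * Real.sqrt (π * α)) + erf y) =
        y + (γ * (1 - ε) * Real.sqrt π / (2 * Dinf)) *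
          (k / (h₀ * Real.sqrt (π * α)) + erf y) * Real.exp (y ^ 2) → y = ξ)
    (hD₀ : D₀ = Dinf * erf ξ / (k / (h₀ * Real.sqrt (π * α)) + erf ξ)) :
    Dinf > D₀ ∧
    erf ξ < (Dinf * D₀ / (Dinf - D₀)) * Real.sqrt (2 * c / (π * γ * (1 - ε) * ℓ)) := by
  have hπ : 0 < π := Real.pi_pos
  have hγ' : 0 < γ * (1 - ε) := mul_pos hγ (by linarith)
  have h1ε : (0:ℝ) < 1 - ε := by linarith
  have hden : 0 < π * γ * (1 - ε) * ℓ :=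
    mul_pos (mul_pos (mul_pos Real.pi_pos hγ) h1ε) hℓ
  have hsarg : 0 < γ * (1 - ε) * ρ * ℓ * k / 2 := by positivity
  have hh0 : 0 < h₀ := lt_trans (by positivity) hh
  have hαpos : 0 < α := by rw [hα]; positivity
  have hπα : 0 < Real.sqrt (π * α) := Real.sqrt_pos.mpr (by positivity)
  set A := k / (h₀ * Real.sqrt (π * α)) with hAdef
  have hA : 0 < A := div_pos hk (mul_pos hh0 hπα)
  have hE : 0 < erf ξ := erf_pos hξpos
  set E := erf ξ
  set S := Real.sqrt (2 * c / (π * γ * (1 - ε) * ℓ)) with hSdef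
  have hS : 0 < S := Real.sqrt_pos.mpr (div_pos (by positivity) hden)
  have hS2 : S ^ 2 = 2 * c / (π * γ * (1 - ε) * ℓ) :=
    Real.sq_sqrt (div_pos (by positivity) hden).le
  -- squared forms
  have hπα2 : (Real.sqrt (π * α)) ^ 2 = π * α := Real.sq_sqrt (by positivity)
  -- from hh : h₀ * Dinf > sqrt(...)
  have hhD : Real.sqrt (γ * (1 - ε) * ρ * ℓ * k / 2) < h₀ * Dinf := by
    have h2 := mul_lt_mul_of_pos_right hh hD
    have h3 : 1 / Dinf * Real.sqrt (γ * (1 - ε) * ρ * ℓ * k / 2) * Dinf =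
        Real.sqrt (γ * (1 - ε) * ρ * ℓ * k / 2) := by
      field_simp
    rw [h3] at h2
    linarith
  have hhD2 : γ * (1 - ε) * ρ * ℓ * k / 2 < (h₀ * Dinf) ^ 2 :=
    (Real.sqrt_lt' (by positivity)).mp hhD
  -- key: A < Dinf * S
  have hkey : A < Dinf * S := by
    have hsq : A ^ 2 < (Dinf * S) ^ 2 := by
      have hAe : A ^ 2 = k * ρ * c / (π * h₀ ^ 2) := by
        rw [hAdef, div_pow, mul_pow, hπα2, hα]
        field_simp
      rw [hAe, mul_pow, hS2]
      have hre : Dinf ^ 2 * (2 * c / (π * γ * (1 - ε) * ℓ)) =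
          (Dinf ^ 2 * (2 * c)) / (π * γ * (1 - ε) * ℓ) := by ring
      rw [hre, div_lt_div_iff₀ (by positivity) hden]
      nlinarith [mul_lt_mul_of_pos_left hhD2 (by positivity : (0:ℝ) < 2 * c * π)]
    exact lt_of_pow_lt_pow_left₀ 2 (by positivity) hsq
  have hAE : 0 < A + E := by linarith
  have hDlt : D₀ < Dinf := by
    rw [hD₀, div_lt_iff₀ hAE]
    nlinarith
  refine ⟨hDlt, ?_⟩
  have hfrac : Dinf * D₀ / (Dinf - D₀) = Dinf * E / A := by
    have hsub : Dinf - D₀ = Dinf * A / (A + E) := by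
      rw [hD₀]; field_simp; ring
    rw [hsub, hD₀]
    rw [div_eq_div_iff (by positivity) hA.ne']
    field_simp
  rw [hfrac]
  rw [div_mul_eq_mul_div, lt_div_iff₀ hA]
  nlinarith [mul_lt_mul_of_pos_left hkey hE]
end

section
/- Let ρ, c, k, ℓ, γ, q₀ be positive reals, α = k/(ρc), and 0 < ε < 1. Define G₃(x) = [x + (γ(1-ε)k/(2q₀√α))·exp(x²)]·exp(x²) for x > 0. Then the equation G₃(x) = q₀/(ρℓ√α) has a (unique) solution x = ω > 0 if and only if q₀ > √(γ(1-ε)ρℓk/2); moreover, when this inequality holds the positive solution ω is unique. -/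
open Real Filter Set Topology

/-- The equation `G₃(x) = q₀/(ρℓ√α)` determining the solid–mushy interface coefficient
`ω` for the heat-flux boundary condition has a positive solution iff
`q₀ > √(γ(1-ε)ρℓk/2)`, and in that case the positive solution is unique. -/
theorem stmt_16 (ρ c k ℓ γ q₀ α ε : ℝ)
    (hρ : 0 < ρ) (hc : 0 < c) (hk : 0 < k) (hℓ : 0 < ℓ) (hγ : 0 < γ) (hq : 0 < q₀)
    (hα : α = k / (ρ * c)) (hε0 : 0 < ε) (hε1 : ε < 1)
    (G₃ : ℝ → ℝ)
    (hG₃ : ∀ x, G₃ x = (x + (γ * (1 - ε) * k / (2 * q₀ * Real.sqrt α)) *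
      Real.exp (x ^ 2)) * Real.exp (x ^ 2)) :
    ((∃ ω > (0:ℝ), G₃ ω = q₀ / (ρ * ℓ * Real.sqrt α)) ↔
      q₀ > Real.sqrt (γ * (1 - ε) * ρ * ℓ * k / 2)) ∧
    (q₀ > Real.sqrt (γ * (1 - ε) * ρ * ℓ * k / 2) →
      ∃! ω : ℝ, ω > 0 ∧ G₃ ω = q₀ / (ρ * ℓ * Real.sqrt α)) := by
  have hα0 : 0 < α := by rw [hα]; positivity
  have hsα : 0 < Real.sqrt α := Real.sqrt_pos.2 hα0
  have hεε : 0 < 1 - ε := by linarith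
  set A : ℝ := γ * (1 - ε) * k / (2 * q₀ * Real.sqrt α) with hA
  set T : ℝ := q₀ / (ρ * ℓ * Real.sqrt α) with hT
  have hApos : 0 < A := by rw [hA]; positivity
  have hTpos : 0 < T := by rw [hT]; positivity
  -- key equivalence between the inequality and A < T
  have hkey : q₀ > Real.sqrt (γ * (1 - ε) * ρ * ℓ * k / 2) ↔ A < T := by
    rw [gt_iff_lt, Real.sqrt_lt' hq, hA, hT,
      div_lt_div_iff₀ (by positivity) (by positivity),
      show γ * (1 - ε) * k * (ρ * ℓ * Real.sqrt α)
          = (γ * (1 - ε) * k * (ρ * ℓ)) * Real.sqrt α by ring,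
      show q₀ * (2 * q₀ * Real.sqrt α) = (q₀ * (2 * q₀)) * Real.sqrt α by ring,
      mul_lt_mul_iff_left₀ hsα]
    constructor <;> intro h <;> nlinarith [h]
  -- strict monotonicity on [0, ∞)
  have hmono : ∀ x y : ℝ, 0 ≤ x → x < y → G₃ x < G₃ y := by
    intro x y hx hxy
    rw [hG₃, hG₃]
    have hx2 : x ^ 2 < y ^ 2 := by nlinarith
    have he : Real.exp (x ^ 2) < Real.exp (y ^ 2) := Real.exp_lt_exp.2 hx2
    have h1 : x + A * Real.exp (x ^ 2) ≤ y + A * Real.exp (y ^ 2) := by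
      have := mul_le_mul_of_nonneg_left he.le hApos.le
      linarith
    have hy : 0 < y := lt_of_le_of_lt hx hxy
    have hb : 0 < y + A * Real.exp (y ^ 2) := by positivity
    exact mul_lt_mul' h1 he (Real.exp_pos _).le hb
  have hG0 : G₃ 0 = A := by rw [hG₃]; simp
  -- existence when A < T
  have hexists : A < T → ∃ ω > (0:ℝ), G₃ ω = T := by
    intro hAT
    have hcont : ContinuousOn G₃ (Set.Icc 0 T) := by
      have hfe : G₃ = fun x => (x + A * Real.exp (x ^ 2)) * Real.exp (x ^ 2) :=
        funext hG₃
      rw [hfe]; fun_prop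
    have hGT : T ≤ G₃ T := by
      rw [hG₃]
      nlinarith [Real.one_le_exp (sq_nonneg T), mul_pos hApos (Real.exp_pos (T ^ 2)),
        hTpos, Real.exp_pos (T ^ 2)]
    have hmem : T ∈ Set.Icc (G₃ 0) (G₃ T) := ⟨by rw [hG0]; exact hAT.le, hGT⟩
    obtain ⟨ω, hωmem, hωeq⟩ := intermediate_value_Icc hTpos.le hcont hmem
    have hω0 : 0 < ω := by
      rcases hωmem.1.lt_or_eq with h | h
      · exact h
      · exfalso; rw [← h] at hωeq; rw [hG0] at hωeq; linarith
    exact ⟨ω, hω0, hωeq⟩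
  constructor
  · rw [hkey]
    constructor
    · rintro ⟨ω, hω0, hωeq⟩
      have := hmono 0 ω le_rfl hω0
      rw [hG0, hωeq] at this
      exact this
    · exact hexists
  · intro h
    obtain ⟨ω, hω0, hωeq⟩ := hexists (hkey.mp h)
    refine ⟨ω, ⟨hω0, hωeq⟩, ?_⟩
    rintro y ⟨hy0, hyeq⟩
    rcases lt_trichotomy y ω with hlt | heq | hgt
    · exact absurd (hmono y ω hy0.le hlt) (by rw [hyeq, hωeq]; exact lt_irrefl T)
    · exact heq
    · exact absurd (hmono ω y hω0.le hgt) (by rw [hyeq, hωeq]; exact lt_irrefl T)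
end

section
/- Let ρ, c, k, ℓ, γ, q₀ be positive reals, α = k/(ρc), 0 < ε < 1, and ω > 0. Define T(x,t) = -(q₀√(πα)/k)·erf(ω)·[1 - erf(x/(2√(αt)))/erf(ω)], s(t) = 2ω√(αt), ν = ω + (γk/(2q₀√α))·exp(ω²), and r(t) = 2ν√(αt). Then: (i) T satisfies T_t = α T_xx for 0 < x < s(t), t > 0; (ii) T(s(t),t) = 0 for t > 0; (iii) k T_x(0,t) = q₀/√t for t > 0; (iv) T_x(s(t),t)·(r(t) - s(t)) = γ for t > 0; and (v) the Stefan condition k T_x(s(t),t) = ρℓ[ε s'(t) + (1-ε) r'(t)] holds for all t > 0 if and only if ω satisfies [ω + (γ(1-ε)k/(2q₀√α))·exp(ω²)]·exp(ω²) = q₀/(ρℓ√α). -/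
open Real Filter Set Topology

lemma eq_iff_of_sub_eq_mul {a b c d m : ℝ} (hm : m ≠ 0) (h : a - b = m * (c - d)) :
    (a = b ↔ c = d) := by
  constructor <;> intro hh
  · have h2 : m * (c - d) = 0 := by rw [← h, hh, sub_self]
    rcases mul_eq_zero.mp h2 with h' | h'
    · exact absurd h' hm
    · linarith
  · rw [hh, sub_self, mul_zero, sub_eq_zero] at h; exact h

/-- The explicit candidate solution for the heat-flux mushy-zone problem: heat equation,
vanishing on the solid–mushy interface, heat-flux boundary condition, mushy-zone width
condition, and the Stefan condition iff `ω` solves the transcendental equation. -/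
theorem stmt_17 (ρ c k ℓ γ q₀ α ε ω ν : ℝ)
    (hρ : 0 < ρ) (hc : 0 < c) (hk : 0 < k) (hℓ : 0 < ℓ) (hγ : 0 < γ) (hq : 0 < q₀)
    (hα : α = k / (ρ * c)) (hε0 : 0 < ε) (hε1 : ε < 1) (hω : 0 < ω)
    (T : ℝ → ℝ → ℝ) (s r : ℝ → ℝ)
    (hT : ∀ x t, T x t = -(q₀ * Real.sqrt (π * α) / k) * erf ω *
      (1 - erf (x / (2 * Real.sqrt (α * t))) / erf ω))
    (hs : ∀ t, s t = 2 * ω * Real.sqrt (α * t))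
    (hν : ν = ω + (γ * k / (2 * q₀ * Real.sqrt α)) * Real.exp (ω ^ 2))
    (hr : ∀ t, r t = 2 * ν * Real.sqrt (α * t)) :
    (∀ t > (0:ℝ), ∀ x, 0 < x → x < s t →
      deriv (fun τ => T x τ) t = α * deriv (deriv (fun y => T y t)) x) ∧
    (∀ t > (0:ℝ), T (s t) t = 0) ∧
    (∀ t > (0:ℝ), k * deriv (fun y => T y t) 0 = q₀ / Real.sqrt t) ∧
    (∀ t > (0:ℝ), deriv (fun y => T y t) (s t) * (r t - s t) = γ) ∧
    ((∀ t > (0:ℝ), k * deriv (fun y => T y t) (s t) =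
        ρ * ℓ * (ε * deriv s t + (1 - ε) * deriv r t)) ↔
      (ω + (γ * (1 - ε) * k / (2 * q₀ * Real.sqrt α)) * Real.exp (ω ^ 2)) *
        Real.exp (ω ^ 2) = q₀ / (ρ * ℓ * Real.sqrt α)) := by
  have hπ : (0:ℝ) < π := Real.pi_pos
  have hα0 : 0 < α := by rw [hα]; positivity
  have herfω : 0 < erf ω := erf_pos hω
  set A := q₀ * Real.sqrt (π * α) / k with hA
  have hTsimp : ∀ x t, T x t = -(A * erf ω) + A * erf (x / (2 * Real.sqrt (α * t))) := by
    intro x t; rw [hT x t]; field_simp [herfω.ne']; ring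
  have hDx : ∀ t x : ℝ, HasDerivAt (fun y => T y t)
      (A * (2 / Real.sqrt π * Real.exp (-(x / (2 * Real.sqrt (α * t))) ^ 2) *
        (1 / (2 * Real.sqrt (α * t))))) x := by
    intro t x
    have hfun : (fun y => T y t) =
        fun y => -(A * erf ω) + A * erf (y / (2 * Real.sqrt (α * t))) :=
      funext fun y => hTsimp y t
    rw [hfun]
    have h1 : HasDerivAt (fun y : ℝ => y / (2 * Real.sqrt (α * t)))
        (1 / (2 * Real.sqrt (α * t))) x := (hasDerivAt_id x).div_const _
    exact (((erf_hasDerivAt (x / (2 * Real.sqrt (α * t)))).comp x h1).const_mul A).const_add _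
  refine ⟨?_, ?_, ?_, ?_, ?_⟩
  · -- part i : heat equation
    intro t ht x hx hxs
    have hat0 : (0:ℝ) < α * t := by positivity
    have hsat0 : (0:ℝ) < Real.sqrt (α * t) := Real.sqrt_pos.mpr hat0
    have hsp0 : (0:ℝ) < Real.sqrt π := Real.sqrt_pos.mpr hπ
    have hval1 : deriv (fun τ => T x τ) t =
        A * (2 / Real.sqrt π * Real.exp (-(x / (2 * Real.sqrt (α * t))) ^ 2) *
          ((0 * (2 * Real.sqrt (α * t)) - x * (2 * (1 / (2 * Real.sqrt (α * t)) * (α * 1)))) /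
            (2 * Real.sqrt (α * t)) ^ 2)) := by
      have hfun : (fun τ => T x τ) =
          fun τ => -(A * erf ω) + A * erf (x / (2 * Real.sqrt (α * τ))) :=
        funext fun τ => hTsimp x τ
      rw [hfun]
      have h1 : HasDerivAt (fun τ : ℝ => α * τ) (α * 1) t := (hasDerivAt_id t).const_mul α
      have h2 : HasDerivAt (fun τ : ℝ => Real.sqrt (α * τ))
          (1 / (2 * Real.sqrt (α * t)) * (α * 1)) t :=
        (Real.hasDerivAt_sqrt hat0.ne').comp t h1
      have h3 := h2.const_mul 2
      have h5 := (hasDerivAt_const t x).div h3 (by positivity)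
      have h6 := (erf_hasDerivAt (x / (2 * Real.sqrt (α * t)))).comp t h5
      exact ((h6.const_mul A).const_add (-(A * erf ω))).deriv
    have hderivTx : deriv (fun y => T y t) =
        fun y => A * (2 / Real.sqrt π * Real.exp (-(y / (2 * Real.sqrt (α * t))) ^ 2) *
          (1 / (2 * Real.sqrt (α * t)))) := funext fun y => (hDx t y).deriv
    have hval2 : deriv (deriv (fun y => T y t)) x =
        A * (2 / Real.sqrt π *
          (Real.exp (-(x / (2 * Real.sqrt (α * t))) ^ 2) *
            -(2 * (x / (2 * Real.sqrt (α * t))) * (1 / (2 * Real.sqrt (α * t))))) *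
          (1 / (2 * Real.sqrt (α * t)))) := by
      rw [hderivTx]
      have h1 : HasDerivAt (fun y : ℝ => y / (2 * Real.sqrt (α * t)))
          (1 / (2 * Real.sqrt (α * t))) x := (hasDerivAt_id x).div_const _
      have h2 : HasDerivAt (fun y : ℝ => -(y / (2 * Real.sqrt (α * t))) ^ 2)
          (-(2 * (x / (2 * Real.sqrt (α * t))) * (1 / (2 * Real.sqrt (α * t))))) x := by
        have := (h1.pow 2).neg
        refine this.congr_deriv ?_
        push_cast
        norm_num
      have h3 := h2.exp
      exact (((h3.const_mul (2 / Real.sqrt π)).mul_const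
        (1 / (2 * Real.sqrt (α * t)))).const_mul A).deriv
    rw [hval1, hval2]
    field_simp
    ring
  · -- part ii
    intro t ht
    have hst0 : (0:ℝ) < Real.sqrt (α * t) := Real.sqrt_pos.mpr (by positivity)
    have harg : s t / (2 * Real.sqrt (α * t)) = ω := by
      rw [hs t]; field_simp
    rw [hTsimp, harg]; ring
  · -- part iii
    intro t ht
    have hst0 : (0:ℝ) < Real.sqrt t := Real.sqrt_pos.mpr ht
    have hsa0 : (0:ℝ) < Real.sqrt α := Real.sqrt_pos.mpr hα0
    have hsp0 : (0:ℝ) < Real.sqrt π := Real.sqrt_pos.mpr hπ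
    rw [(hDx t 0).deriv, hA, Real.sqrt_mul hπ.le α, Real.sqrt_mul hα0.le t]
    rw [zero_div]
    norm_num
    field_simp
  · -- part iv
    intro t ht
    have hst0 : (0:ℝ) < Real.sqrt t := Real.sqrt_pos.mpr ht
    have hsa0 : (0:ℝ) < Real.sqrt α := Real.sqrt_pos.mpr hα0
    have hsp0 : (0:ℝ) < Real.sqrt π := Real.sqrt_pos.mpr hπ
    have hsat0 : (0:ℝ) < Real.sqrt (α * t) := Real.sqrt_pos.mpr (by positivity)
    have harg : s t / (2 * Real.sqrt (α * t)) = ω := by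
      rw [hs t]; field_simp
    have hd := (hDx t (s t)).deriv
    rw [harg] at hd
    rw [hd, hr t, hs t, hν, hA, Real.sqrt_mul hπ.le α, Real.sqrt_mul hα0.le t,
      Real.exp_neg]
    field_simp
    ring
  · -- part v
    have main : ∀ t, 0 < t → ((k * deriv (fun y => T y t) (s t) =
        ρ * ℓ * (ε * deriv s t + (1 - ε) * deriv r t)) ↔
      (ω + (γ * (1 - ε) * k / (2 * q₀ * Real.sqrt α)) * Real.exp (ω ^ 2)) *
        Real.exp (ω ^ 2) = q₀ / (ρ * ℓ * Real.sqrt α)) := by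
      intro t ht
      have hat0 : (0:ℝ) < α * t := by positivity
      have hsat0 : (0:ℝ) < Real.sqrt (α * t) := Real.sqrt_pos.mpr hat0
      have hsp0 : (0:ℝ) < Real.sqrt π := Real.sqrt_pos.mpr hπ
      have hst0 : (0:ℝ) < Real.sqrt t := Real.sqrt_pos.mpr ht
      have hsa0 : (0:ℝ) < Real.sqrt α := Real.sqrt_pos.mpr hα0
      have harg : s t / (2 * Real.sqrt (α * t)) = ω := by
        rw [hs t]; field_simp
      have hd := (hDx t (s t)).deriv
      rw [harg] at hd
      have hds : deriv s t = 2 * ω * (1 / (2 * Real.sqrt (α * t)) * (α * 1)) := by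
        have h1 : HasDerivAt (fun τ : ℝ => α * τ) (α * 1) t := (hasDerivAt_id t).const_mul α
        have h2 := (Real.hasDerivAt_sqrt hat0.ne').comp t h1
        have hfun : s = fun τ => 2 * ω * Real.sqrt (α * τ) := funext hs
        rw [hfun]
        exact (h2.const_mul (2 * ω)).deriv
      have hdr : deriv r t = 2 * ν * (1 / (2 * Real.sqrt (α * t)) * (α * 1)) := by
        have h1 : HasDerivAt (fun τ : ℝ => α * τ) (α * 1) t := (hasDerivAt_id t).const_mul α
        have h2 := (Real.hasDerivAt_sqrt hat0.ne').comp t h1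
        have hfun : r = fun τ => 2 * ν * Real.sqrt (α * τ) := funext hr
        rw [hfun]
        exact (h2.const_mul (2 * ν)).deriv
      rw [hd, hds, hdr, hν, hA, Real.sqrt_mul hπ.le α, Real.sqrt_mul hα0.le t, Real.exp_neg]
      have hsa2 : Real.sqrt α * Real.sqrt α = α := Real.mul_self_sqrt hα0.le
      generalize hg : Real.sqrt α = sa at hsa2 hsa0 ⊢
      rw [← hsa2]
      apply eq_iff_of_sub_eq_mul
        (m := -(ρ * ℓ * sa / (Real.exp (ω ^ 2) * Real.sqrt t)))
        (neg_ne_zero.mpr (by positivity))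
      field_simp
      ring
    exact ⟨fun h => (main 1 one_pos).mp (h 1 one_pos), fun h t ht => (main t ht).mpr h⟩
end

section
/- Let ρ, c, k, ℓ, γ, q₀ be positive reals, α = k/(ρc), 0 < ε < 1, and suppose q₀ > √(γ(1-ε)ρℓk/2). Let ω > 0 be the unique solution of [x + (γ(1-ε)k/(2q₀√α))·exp(x²)]·exp(x²) = q₀/(ρℓ√α), and set D₀ = (q₀√(πα)/k)·erf(ω). Then D₀ > 0 and ω is the unique positive solution of the equation G₂(x) = D₀c/(ℓ√π), where F∞(x) = exp(-x²)/erf(x), G₀(x) = x + (γ(1-ε)√π/(2D₀))·(1/F∞(x)), and G₂(x) = G₀(x)/F∞(x). -/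
open Real Filter Set Topology

/-- Equivalence of the heat-flux problem with the temperature problem: with
`D₀ = (q₀√(πα)/k) erf ω` one has `D₀ > 0`, and `ω` is the unique positive solution of
the temperature-problem equation `G₂(x) = D₀ c/(ℓ√π)`. -/
theorem stmt_18 (ρ c k ℓ γ q₀ α ε ω D₀ : ℝ)
    (hρ : 0 < ρ) (hc : 0 < c) (hk : 0 < k) (hℓ : 0 < ℓ) (hγ : 0 < γ) (hq0 : 0 < q₀)
    (hα : α = k / (ρ * c)) (hε0 : 0 < ε) (hε1 : ε < 1)
    (hq : q₀ > Real.sqrt (γ * (1 - ε) * ρ * ℓ * k / 2))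
    (hωpos : 0 < ω)
    (hωeq : (ω + (γ * (1 - ε) * k / (2 * q₀ * Real.sqrt α)) * Real.exp (ω ^ 2)) *
      Real.exp (ω ^ 2) = q₀ / (ρ * ℓ * Real.sqrt α))
    (hωuniq : ∀ y > (0:ℝ),
      (y + (γ * (1 - ε) * k / (2 * q₀ * Real.sqrt α)) * Real.exp (y ^ 2)) *
        Real.exp (y ^ 2) = q₀ / (ρ * ℓ * Real.sqrt α) → y = ω)
    (hD₀ : D₀ = (q₀ * Real.sqrt (π * α) / k) * erf ω)
    (Finf G₀ G₂ : ℝ → ℝ)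
    (hFinf : ∀ x, Finf x = Real.exp (-x ^ 2) / erf x)
    (hG₀ : ∀ x, G₀ x = x + (γ * (1 - ε) * Real.sqrt π / (2 * D₀)) * (1 / Finf x))
    (hG₂ : ∀ x, G₂ x = G₀ x / Finf x) :
    0 < D₀ ∧
    (G₂ ω = D₀ * c / (ℓ * Real.sqrt π)) ∧
    (∀ y > (0:ℝ), G₂ y = D₀ * c / (ℓ * Real.sqrt π) → y = ω) := by
  have hαpos : 0 < α := by rw [hα]; positivity
  have hsa : 0 < Real.sqrt α := Real.sqrt_pos.2 hαpos
  have hsπ : 0 < Real.sqrt π := Real.sqrt_pos.2 Real.pi_pos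
  have herfω : 0 < erf ω := erf_pos hωpos
  have hD₀pos : 0 < D₀ := by rw [hD₀]; positivity
  have hεpos : 0 < 1 - ε := by linarith
  set K : ℝ := γ * (1 - ε) * Real.sqrt π / (2 * D₀) with hK
  have hKpos : 0 < K := by positivity
  have hE : ∀ x : ℝ, 0 < x →
      G₂ x = (x + K * (erf x * Real.exp (x ^ 2))) * (erf x * Real.exp (x ^ 2)) := by
    intro x hx
    have he : 0 < erf x := erf_pos hx
    rw [hG₂, hG₀, hFinf, Real.exp_neg]
    field_simp
  have hsqmul : Real.sqrt (π * α) = Real.sqrt π * Real.sqrt α :=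
    Real.sqrt_mul Real.pi_pos.le α
  have hKerf : K * erf ω = γ * (1 - ε) * k / (2 * q₀ * Real.sqrt α) := by
    rw [hK, hD₀, hsqmul]
    field_simp
  have hαsq : Real.sqrt α * Real.sqrt α = α := Real.mul_self_sqrt hαpos.le
  have hmain : G₂ ω = D₀ * c / (ℓ * Real.sqrt π) := by
    rw [hE ω hωpos]
    have h1 : (ω + K * (erf ω * Real.exp (ω ^ 2))) * (erf ω * Real.exp (ω ^ 2))
        = ((ω + (K * erf ω) * Real.exp (ω ^ 2)) * Real.exp (ω ^ 2)) * erf ω := by ring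
    rw [h1, hKerf, hωeq, hD₀, hsqmul]
    have hkval : k = α * (ρ * c) := by rw [hα]; field_simp
    rw [hkval]
    field_simp
    have hαsq2 : Real.sqrt α ^ 2 = α := Real.sq_sqrt hαpos.le
    linear_combination (-1) * hαsq2
  refine ⟨hD₀pos, hmain, ?_⟩
  intro y hy heq
  have hmono : StrictMonoOn
      (fun x => (x + K * (erf x * Real.exp (x ^ 2))) * (erf x * Real.exp (x ^ 2)))
      (Set.Ioi (0:ℝ)) := by
    intro a ha b hb hab
    simp only [Set.mem_Ioi] at ha hb
    have hea : 0 < erf a := erf_pos ha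
    have heb : 0 < erf b := erf_pos hb
    have herf : erf a < erf b := erf_strictMono hab
    have hexp : Real.exp (a ^ 2) < Real.exp (b ^ 2) := by
      apply Real.exp_lt_exp.2; nlinarith
    have hEa : 0 < erf a * Real.exp (a ^ 2) := by positivity
    have hEb : erf a * Real.exp (a ^ 2) < erf b * Real.exp (b ^ 2) :=
      mul_lt_mul'' herf hexp hea.le (Real.exp_pos _).le
    dsimp only
    have h2 : a + K * (erf a * Real.exp (a ^ 2)) < b + K * (erf b * Real.exp (b ^ 2)) := by
      have := mul_lt_mul_of_pos_left hEb hKpos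
      linarith
    have h3 : 0 < a + K * (erf a * Real.exp (a ^ 2)) := by positivity
    exact mul_lt_mul'' h2 hEb h3.le hEa.le
  have h1 : G₂ y = G₂ ω := by rw [heq, hmain]
  rw [hE y hy, hE ω hωpos] at h1
  exact hmono.injOn (Set.mem_Ioi.2 hy) (Set.mem_Ioi.2 hωpos) h1
end
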